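/- A φ-monotone path γ = (v_0, v_1, …, v_{m+1}) on the cross-polytope ◇^n is coherent if and only if no antipodal pair occurs among its interior vertices; that is, if and only if there is no index j ∈ {1,…,n−1} such that both e_j and −e_j occur among v_1,…,v_m. -/

import Mathlib

open scoped BigOperators

/-- The `i`-th standard basis vector of `ℝ^n`. -/
noncomputable def stdVec (n : ℕ) (i : Fin n) : Fin n → ℝ := Pi.single i 1

/-- The last standard basis vector `e_n` of `ℝ^{n+2}`. -/
noncomputable def lastVec (n : ℕ) : Fin (n + 2) → ℝ := stdVec (n + 2) (Fin.last (n + 1))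

/-- The linear functional `φ(x) = ∑ i, a i * x i`. -/
def phi (n : ℕ) (a : Fin (n + 2) → ℝ) (x : Fin (n + 2) → ℝ) : ℝ := ∑ i, a i * x i

/-- A vertex of the cross-polytope `◇^n`: one of the `2n` points `±e_i`. -/
def IsCPVertex (n : ℕ) (x : Fin n → ℝ) : Prop :=
  ∃ i : Fin n, x = stdVec n i ∨ x = -stdVec n i

/-- The cross-polytope `◇^n = conv{±e_1, …, ±e_n}`. -/
noncomputable def crossPoly (n : ℕ) : Set (Fin n → ℝ) :=
  convexHull ℝ {x | IsCPVertex n x}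

/-- A `φ`-monotone path on `◇^{n+2}`, encoded as the list of its vertices:
it starts at `-e_n`, ends at `e_n`, visits only vertices, is strictly `φ`-increasing,
and consecutive vertices are not antipodal. -/
def IsMonoPath (n : ℕ) (a : Fin (n + 2) → ℝ) (l : List (Fin (n + 2) → ℝ)) : Prop :=
  l.head? = some (-lastVec n) ∧
  l.getLast? = some (lastVec n) ∧
  (∀ v ∈ l, IsCPVertex (n + 2) v) ∧
  l.Chain' (fun u v => phi n a u < phi n a v ∧ v ≠ -u)

/-- A monotone path is combinatorially coherent if no antipodal pair `±e_j`
(`j ∈ {1, …, n-1}`) occurs among its interior vertices. -/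
def CombCoherent (n : ℕ) (l : List (Fin (n + 2) → ℝ)) : Prop :=
  ¬ ∃ j : Fin (n + 1), stdVec (n + 2) j.castSucc ∈ l.tail.dropLast ∧
      -stdVec (n + 2) j.castSucc ∈ l.tail.dropLast

/-- The Billera–Sturmfels point `p(γ)` associated to a monotone path. -/
noncomputable def pathPoint (n : ℕ) (a : Fin (n + 2) → ℝ) (l : List (Fin (n + 2) → ℝ)) :
    Fin (n + 2) → ℝ :=
  ((l.zip l.tail).map fun q =>
    ((phi n a q.2 - phi n a q.1) / (4 * a (Fin.last (n + 1)))) • (q.1 + q.2)).sum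

/-- The monotone path polytope `MPP_φ(◇^{n+2})`. -/
noncomputable def MPP (n : ℕ) (a : Fin (n + 2) → ℝ) : Set (Fin (n + 2) → ℝ) :=
  convexHull ℝ {x | ∃ l, IsMonoPath n a l ∧ x = pathPoint n a l}

open Classical in
/-- The sign vector `σ(γ) ∈ {-1,0,1}^{n+1}` of a monotone path. -/
noncomputable def sigmaVec (n : ℕ) (l : List (Fin (n + 2) → ℝ)) : Fin (n + 1) → ℤ :=
  fun j =>
    if stdVec (n + 2) j.castSucc ∈ l then 1
    else if -stdVec (n + 2) j.castSucc ∈ l then -1 else 0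


/-! ### Auxiliary machinery -/

noncomputable def linF {m : ℕ} (c : Fin m → ℝ) : (Fin m → ℝ) →ₗ[ℝ] ℝ :=
  ∑ i, c i • LinearMap.proj i

lemma linF_apply {m : ℕ} (c x : Fin m → ℝ) : linF c x = ∑ i, c i * x i := by
  simp [linF, smul_eq_mul]

lemma linF_std {m : ℕ} (c : Fin m → ℝ) (i : Fin m) : linF c (stdVec m i) = c i := by
  rw [linF_apply, stdVec, Finset.sum_eq_single i] <;> simp [Pi.single_apply]
  intro b hb; simp [hb]

lemma phi_eq_linF (n : ℕ) (a : Fin (n+2) → ℝ) (x : Fin (n+2) → ℝ) : phi n a x = linF a x :=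
  (linF_apply a x).symm

lemma phi_std (n : ℕ) (a : Fin (n+2) → ℝ) (i : Fin (n+2)) : phi n a (stdVec (n+2) i) = a i := by
  rw [phi_eq_linF, linF_std]

lemma phi_neg (n : ℕ) (a : Fin (n+2) → ℝ) (x : Fin (n+2) → ℝ) : phi n a (-x) = -phi n a x := by
  rw [phi_eq_linF, phi_eq_linF, map_neg]

lemma stdVec_apply_self {m : ℕ} (i : Fin m) : stdVec m i i = 1 := by simp [stdVec]

lemma stdVec_ne_neg {m : ℕ} (i j : Fin m) : stdVec m i ≠ -stdVec m j := by
  intro h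
  have h1 : stdVec m i i = -stdVec m j i := by rw [h]; rfl
  rw [stdVec_apply_self] at h1
  rcases eq_or_ne j i with rfl | hji
  · simp [stdVec_apply_self] at h1; linarith
  · simp [stdVec, Pi.single_apply, hji] at h1

lemma stdVec_inj {m : ℕ} {i j : Fin m} (h : stdVec m i = stdVec m j) : i = j := by
  by_contra hij
  have h1 : stdVec m i i = stdVec m j i := by rw [h]
  rw [stdVec_apply_self] at h1
  simp [stdVec, Pi.single_apply, Ne.symm hij] at h1

lemma chordL_nonpos {A tk tk1 s : ℝ} (hA : 0 < A) (h1 : -A ≤ tk) (h2 : tk < tk1)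
    (h3 : tk1 ≤ A) (hs1 : -A ≤ s) (hs2 : s ≤ A) :
    (tk + tk1) * s - (tk * tk1 + A^2) ≤ 0 := by
  nlinarith [mul_nonneg (by linarith : (0:ℝ) ≤ A - s)
      (mul_nonneg (by linarith : (0:ℝ) ≤ A + tk) (by linarith : (0:ℝ) ≤ A + tk1)),
    mul_nonneg (by linarith : (0:ℝ) ≤ A + s)
      (mul_nonneg (by linarith : (0:ℝ) ≤ A - tk) (by linarith : (0:ℝ) ≤ A - tk1))]

lemma chordL_neg {A tk tk1 s : ℝ} (hA : 0 < A) (h1 : -A ≤ tk) (h2 : tk < tk1)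
    (h3 : tk1 ≤ A) (hst : -A < tk ∨ tk1 < A) (hs1 : -A < s) (hs2 : s < A) :
    (tk + tk1) * s - (tk * tk1 + A^2) < 0 := by
  rcases hst with h | h
  · nlinarith [mul_pos (by linarith : (0:ℝ) < A - s)
        (mul_pos (by linarith : (0:ℝ) < A + tk) (by linarith : (0:ℝ) < A + tk1)),
      mul_nonneg (by linarith : (0:ℝ) ≤ A + s)
        (mul_nonneg (by linarith : (0:ℝ) ≤ A - tk) (by linarith : (0:ℝ) ≤ A - tk1))]
  · nlinarith [mul_pos (by linarith : (0:ℝ) < A + s)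
        (mul_pos (by linarith : (0:ℝ) < A - tk) (by linarith : (0:ℝ) < A - tk1)),
      mul_nonneg (by linarith : (0:ℝ) ≤ A - s)
        (mul_nonneg (by linarith : (0:ℝ) ≤ A + tk) (by linarith : (0:ℝ) ≤ A + tk1))]

lemma sum_affine {ι : Type*} (t : Finset ι) (w p : ι → ℝ) (c1 c0 : ℝ)
    (hw : ∑ i ∈ t, w i = 1) :
    ∑ i ∈ t, w i * (c1 * p i - c0) = c1 * (∑ i ∈ t, w i * p i) - c0 := by
  have h : ∀ i ∈ t, w i * (c1 * p i - c0) = c1 * (w i * p i) - c0 * w i := fun i _ => by ring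
  rw [Finset.sum_congr rfl h, Finset.sum_sub_distrib, ← Finset.mul_sum, ← Finset.mul_sum,
    hw, mul_one]

section Main

variable {n : ℕ} {a : Fin (n + 2) → ℝ} {l : List (Fin (n + 2) → ℝ)}

lemma a_pos (h0 : 0 < a 0) (ha : StrictMono a) (i : Fin (n+2)) : 0 < a i :=
  lt_of_lt_of_le h0 (ha.monotone (Fin.zero_le i))

lemma a_lt_last (ha : StrictMono a) {i : Fin (n+2)} (hi : i ≠ Fin.last (n+1)) :
    a i < a (Fin.last (n+1)) := ha (lt_of_le_of_ne (Fin.le_last i) hi)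

lemma phi_vertex_inj (h0 : 0 < a 0) (ha : StrictMono a) {u v : Fin (n+2) → ℝ}
    (hu : IsCPVertex (n+2) u) (hv : IsCPVertex (n+2) v) (h : phi n a u = phi n a v) : u = v := by
  obtain ⟨i, hi⟩ := hu; obtain ⟨j, hj⟩ := hv
  have hai := a_pos h0 ha i; have haj := a_pos h0 ha j
  rcases hi with rfl | rfl <;> rcases hj with rfl | rfl <;>
    simp only [phi_neg, phi_std] at h
  · rw [ha.injective h]
  · linarith
  · linarith
  · rw [ha.injective (neg_inj.mp h)]

lemma phi_vertex_abs_le (h0 : 0 < a 0) (ha : StrictMono a) {u : Fin (n+2) → ℝ}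
    (hu : IsCPVertex (n+2) u) : |phi n a u| ≤ a (Fin.last (n+1)) := by
  obtain ⟨i, hi⟩ := hu
  have h1 : a i ≤ a (Fin.last (n+1)) := ha.monotone (Fin.le_last i)
  have h2 := a_pos h0 ha i
  rcases hi with rfl | rfl <;> simp [phi_neg, phi_std, abs_le] <;> constructor <;> linarith

/-! ### Facts about monotone paths -/

lemma mp_ne_nil (hl : IsMonoPath n a l) : l ≠ [] := by
  rintro rfl; simp [IsMonoPath] at hl

lemma mp_first (hl : IsMonoPath n a l) (h : 0 < l.length) : l[0] = -lastVec n := by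
  have h1 := hl.1
  rw [List.head?_eq_head (mp_ne_nil hl), List.head_eq_getElem] at h1
  exact Option.some_injective _ h1

lemma mp_last (hl : IsMonoPath n a l) (h : l.length - 1 < l.length) :
    l[l.length - 1] = lastVec n := by
  have h1 := hl.2.1
  rw [List.getLast?_eq_getLast (mp_ne_nil hl), List.getLast_eq_getElem] at h1
  exact Option.some_injective _ h1

lemma mp_len3 (hl : IsMonoPath n a l) : 3 ≤ l.length := by
  rcases l with _ | ⟨x, _ | ⟨y, _ | ⟨z, r⟩⟩⟩
  · exact absurd rfl (mp_ne_nil hl)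
  · obtain ⟨h1, h2, -, -⟩ := hl
    simp only [List.head?_cons, Option.some_inj] at h1
    simp only [List.getLast?_singleton, Option.some_inj] at h2
    exact absurd (h2 ▸ h1 : lastVec n = -lastVec n)
      (stdVec_ne_neg (Fin.last (n+1)) (Fin.last (n+1)))
  · obtain ⟨h1, h2, -, h4⟩ := hl
    simp only [List.head?_cons, Option.some_inj] at h1
    have h2' : y = lastVec n := by simpa using h2
    simp only [List.Chain', List.isChain_cons_cons] at h4
    exact absurd (by rw [h1, h2', neg_neg]) h4.1.2
  · simp only [List.length_cons]; omega

lemma mp_lt (hl : IsMonoPath n a l) {i j : ℕ} (hij : i < j) (hj : j < l.length) :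
    phi n a (l[i]'(by omega)) < phi n a l[j] := by
  have hc : l.Chain' (fun u v => phi n a u < phi n a v) :=
    hl.2.2.2.imp (fun a b h => h.1)
  haveI : Trans (fun u v : Fin (n+2) → ℝ => phi n a u < phi n a v)
      (fun u v => phi n a u < phi n a v) (fun u v => phi n a u < phi n a v) :=
    ⟨fun h1 h2 => lt_trans h1 h2⟩
  have hp := List.pairwise_iff_get.mp (List.isChain_iff_pairwise.mp hc)
  exact hp ⟨i, by omega⟩ ⟨j, hj⟩ hij

lemma mp_le (hl : IsMonoPath n a l) {i j : ℕ} (hij : i ≤ j) (hj : j < l.length) :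
    phi n a (l[i]'(by omega)) ≤ phi n a l[j] := by
  rcases eq_or_lt_of_le hij with rfl | h
  · exact le_refl _
  · exact le_of_lt (mp_lt hl h hj)

lemma mp_vertex (hl : IsMonoPath n a l) {i : ℕ} (h : i < l.length) :
    IsCPVertex (n+2) l[i] := hl.2.2.1 _ (List.getElem_mem h)

lemma mp_phi_first (hl : IsMonoPath n a l) (h : 0 < l.length) :
    phi n a l[0] = -a (Fin.last (n+1)) := by
  rw [mp_first hl h, phi_neg, lastVec, phi_std]

lemma mp_phi_last (hl : IsMonoPath n a l) (h : l.length - 1 < l.length) :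
    phi n a l[l.length - 1] = a (Fin.last (n+1)) := by
  rw [mp_last hl h, lastVec, phi_std]

lemma mp_interior (hl : IsMonoPath n a l) {u : Fin (n+2) → ℝ} (hu : u ∈ l)
    (h1 : u ≠ -lastVec n) (h2 : u ≠ lastVec n) : u ∈ l.tail.dropLast := by
  obtain ⟨i, hi, rfl⟩ := List.mem_iff_getElem.mp hu
  have hi0 : i ≠ 0 := by rintro rfl; exact h1 (mp_first hl (by omega))
  have hiN : i ≠ l.length - 1 := by rintro rfl; exact h2 (mp_last hl (by omega))
  have hlen : l.tail.dropLast.length = l.length - 1 - 1 := by simp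
  refine List.mem_iff_getElem.mpr ⟨i - 1, by omega, ?_⟩
  rw [List.getElem_dropLast, List.getElem_tail]
  congr 1; omega

lemma mp_interior' {u : Fin (n+2) → ℝ} (hu : u ∈ l.tail.dropLast) :
    ∃ k, ∃ (h : k + 2 < l.length), l[k+1]'(by omega) = u := by
  obtain ⟨k, hk, rfl⟩ := List.mem_iff_getElem.mp hu
  have hlen : l.tail.dropLast.length = l.length - 1 - 1 := by simp
  refine ⟨k, by omega, ?_⟩
  rw [List.getElem_dropLast, List.getElem_tail]

lemma mp_not_both (hl : IsMonoPath n a l) (hc : CombCoherent n l) {i : Fin (n+2)}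
    (hi : i ≠ Fin.last (n+1)) : ¬(stdVec (n+2) i ∈ l ∧ -stdVec (n+2) i ∈ l) := by
  rintro ⟨hp, hm⟩
  obtain ⟨j, rfl⟩ := Fin.exists_castSucc_eq.mpr hi
  refine hc ⟨j, mp_interior hl hp ?_ ?_, mp_interior hl hm ?_ ?_⟩
  · exact stdVec_ne_neg _ _
  · intro h; exact hi (stdVec_inj h)
  · intro h; exact hi (stdVec_inj (neg_injective h))
  · intro h; exact stdVec_ne_neg (Fin.last (n+1)) j.castSucc h.symm

lemma mp_pair_mem {i : ℕ} (h : i + 1 < l.length) :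
    ((l[i]'(by omega)), l[i+1]) ∈ l.zip l.tail := by
  have hlen : (l.zip l.tail).length = l.length - 1 := by simp
  refine List.mem_iff_getElem.mpr ⟨i, by omega, ?_⟩
  rw [List.getElem_zip, List.getElem_tail]

lemma zip_mem_pair {q : (Fin (n+2) → ℝ) × (Fin (n+2) → ℝ)} (h : q ∈ l.zip l.tail) :
    ∃ i, ∃ (hi : i + 1 < l.length), q = ((l[i]'(by omega)), l[i+1]) := by
  obtain ⟨k, hk, rfl⟩ := List.mem_iff_getElem.mp h
  have hlen : (l.zip l.tail).length = l.length - 1 := by simp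
  refine ⟨k, by omega, ?_⟩
  rw [List.getElem_zip, List.getElem_tail]

lemma lastVec_mem (hl : IsMonoPath n a l) : lastVec n ∈ l := by
  have h3 := mp_len3 hl
  have := mp_last hl (by omega)
  exact this ▸ List.getElem_mem (by omega)

lemma neg_lastVec_mem (hl : IsMonoPath n a l) : -lastVec n ∈ l := by
  have h3 := mp_len3 hl
  have := mp_first hl (by omega)
  exact this ▸ List.getElem_mem (by omega)

/-! ### Membership in the cross-polytope -/

lemma crossPoly_decomp {y : Fin (n+2) → ℝ} (hy : y ∈ crossPoly (n+2)) :
    ∃ (ι : Type) (t : Finset ι) (w : ι → ℝ) (z : ι → Fin (n+2) → ℝ),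
      (∀ i ∈ t, 0 ≤ w i) ∧ ∑ i ∈ t, w i = 1 ∧ (∀ i ∈ t, IsCPVertex (n+2) (z i)) ∧
      y = ∑ i ∈ t, w i • z i := by
  rw [crossPoly, convexHull_eq] at hy
  obtain ⟨ι, t, w, z, hw, hw1, hz, hcm⟩ := hy
  exact ⟨ι, t, w, z, hw, hw1, hz, by rw [← hcm, Finset.centerMass_eq_of_sum_1 _ _ hw1]⟩

lemma comb_linF {m : ℕ} (c : Fin m → ℝ) {ι : Type} (t : Finset ι) (w : ι → ℝ)
    (z : ι → Fin m → ℝ) :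
    linF c (∑ i ∈ t, w i • z i) = ∑ i ∈ t, w i * linF c (z i) := by
  rw [map_sum]; simp [smul_eq_mul]

lemma phi_comb {ι : Type} (t : Finset ι) (w : ι → ℝ) (z : ι → Fin (n+2) → ℝ) :
    phi n a (∑ i ∈ t, w i • z i) = ∑ i ∈ t, w i * phi n a (z i) := by
  rw [phi_eq_linF, comb_linF]
  exact Finset.sum_congr rfl fun i _ => by rw [phi_eq_linF]

lemma phi_crossPoly_bounds (h0 : 0 < a 0) (ha : StrictMono a) {y : Fin (n+2) → ℝ}
    (hy : y ∈ crossPoly (n+2)) :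
    -a (Fin.last (n+1)) ≤ phi n a y ∧ phi n a y ≤ a (Fin.last (n+1)) := by
  obtain ⟨ι, t, w, z, hw, hw1, hz, rfl⟩ := crossPoly_decomp hy
  rw [phi_comb]
  constructor
  · calc -a (Fin.last (n+1)) = ∑ i ∈ t, w i * (-a (Fin.last (n+1))) := by
          rw [← Finset.sum_mul, hw1, one_mul]
    _ ≤ ∑ i ∈ t, w i * phi n a (z i) := by
          refine Finset.sum_le_sum fun i hi => mul_le_mul_of_nonneg_left ?_ (hw i hi)
          have := abs_le.mp (phi_vertex_abs_le h0 ha (hz i hi)); linarith [this.1]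
  · calc ∑ i ∈ t, w i * phi n a (z i) ≤ ∑ i ∈ t, w i * a (Fin.last (n+1)) := by
          refine Finset.sum_le_sum fun i hi => mul_le_mul_of_nonneg_left ?_ (hw i hi)
          exact (abs_le.mp (phi_vertex_abs_le h0 ha (hz i hi))).2
    _ = a (Fin.last (n+1)) := by rw [← Finset.sum_mul, hw1, one_mul]

lemma segment_sub_crossPoly {u v : Fin (n+2) → ℝ} (hu : IsCPVertex (n+2) u)
    (hv : IsCPVertex (n+2) v) : segment ℝ u v ⊆ crossPoly (n+2) := by
  rw [← convexHull_pair, crossPoly]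
  refine convexHull_mono ?_
  rintro x (rfl | rfl)
  · exact hu
  · exact hv

end Main

/-! ### The certifying functional for the backward direction -/

open Classical in
noncomputable def psiW (n : ℕ) (a : Fin (n + 2) → ℝ) (l : List (Fin (n + 2) → ℝ)) :
    Fin (n + 2) → ℝ :=
  fun i => if stdVec (n + 2) i ∈ l then a i ^ 2 - a (Fin.last (n + 1)) ^ 2
    else if -stdVec (n + 2) i ∈ l then a (Fin.last (n + 1)) ^ 2 - a i ^ 2 else 0

section Main2

variable {n : ℕ} {a : Fin (n + 2) → ℝ} {l : List (Fin (n + 2) → ℝ)}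

lemma psi_path (h0 : 0 < a 0) (ha : StrictMono a) (hl : IsMonoPath n a l)
    (hc : CombCoherent n l) {u : Fin (n+2) → ℝ} (hu : u ∈ l) :
    linF (psiW n a l) u = phi n a u ^ 2 - a (Fin.last (n+1)) ^ 2 := by
  obtain ⟨i, hi⟩ := hl.2.2.1 u hu
  rcases hi with rfl | rfl
  · rw [linF_std, phi_std, psiW, if_pos hu]
  · rw [map_neg, linF_std, phi_neg, phi_std]
    by_cases hil : i = Fin.last (n+1)
    · subst hil
      rw [psiW]
      split_ifs <;> ring
    · have hns : stdVec (n+2) i ∉ l := fun h => mp_not_both hl hc hil ⟨h, hu⟩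
      rw [psiW]
      simp only [if_neg hns, if_pos hu]
      ring

lemma psi_off (h0 : 0 < a 0) (ha : StrictMono a) (hl : IsMonoPath n a l)
    {u : Fin (n+2) → ℝ} (hv : IsCPVertex (n+2) u) (hu : u ∉ l) :
    0 < linF (psiW n a l) u ∨
      (linF (psiW n a l) u = 0 ∧ |phi n a u| < a (Fin.last (n+1))) := by
  obtain ⟨i, hi⟩ := hv
  have hA := a_pos h0 ha (Fin.last (n+1))
  have hai := a_pos h0 ha i
  rcases hi with rfl | rfl
  · have hil : i ≠ Fin.last (n+1) := by
      rintro rfl; exact hu (lastVec_mem hl)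
    have hlt := a_lt_last ha hil
    rw [linF_std, psiW, if_neg hu]
    by_cases hm : -stdVec (n+2) i ∈ l
    · left; rw [if_pos hm]; nlinarith
    · right
      rw [if_neg hm, phi_std]
      exact ⟨rfl, by rw [abs_of_pos hai]; exact hlt⟩
  · have hil : i ≠ Fin.last (n+1) := by
      rintro rfl; exact hu (neg_lastVec_mem hl)
    have hlt := a_lt_last ha hil
    rw [map_neg, linF_std, psiW, phi_neg, phi_std]
    by_cases hp : stdVec (n+2) i ∈ l
    · left; rw [if_pos hp]; nlinarith
    · right
      have hm : -stdVec (n+2) i ∉ l := hu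
      rw [if_neg hp, if_neg hm]
      exact ⟨by ring, by rw [abs_neg, abs_of_pos hai]; exact hlt⟩

/-- The key chord inequality: for every vertex `u` of the cross-polytope, the value
`ψ u` lies (weakly) above the chord line through consecutive path vertices, with
equality only at those two vertices. -/
lemma chord_key (h0 : 0 < a 0) (ha : StrictMono a) (hl : IsMonoPath n a l)
    (hc : CombCoherent n l) {k : ℕ} (hk : k + 1 < l.length) {u : Fin (n+2) → ℝ}
    (hv : IsCPVertex (n+2) u) :
    (phi n a (l[k]'(by omega)) + phi n a l[k+1]) * phi n a u -
      (phi n a (l[k]'(by omega)) * phi n a l[k+1] + a (Fin.last (n+1)) ^ 2)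
      ≤ linF (psiW n a l) u ∧
    ((phi n a (l[k]'(by omega)) + phi n a l[k+1]) * phi n a u -
      (phi n a (l[k]'(by omega)) * phi n a l[k+1] + a (Fin.last (n+1)) ^ 2)
      = linF (psiW n a l) u → u = l[k]'(by omega) ∨ u = l[k+1]) := by
  have h3 := mp_len3 hl
  set A := a (Fin.last (n+1)) with hAdef
  have hA : 0 < A := a_pos h0 ha _
  set tk := phi n a (l[k]'(by omega)) with htk
  set tk1 := phi n a l[k+1] with htk1
  set s := phi n a u with hs
  have hklt : tk < tk1 := mp_lt hl (Nat.lt_succ_self k) hk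
  have htk_lb : -A ≤ tk := by
    have := mp_le hl (Nat.zero_le k) (by omega)
    rwa [mp_phi_first hl (by omega)] at this
  have htk1_ub : tk1 ≤ A := by
    have := mp_le hl (by omega : k + 1 ≤ l.length - 1) (by omega)
    rwa [mp_phi_last hl (by omega)] at this
  have hstrict : -A < tk ∨ tk1 < A := by
    rcases Nat.eq_zero_or_pos k with hk0 | hkpos
    · right
      have hlt : k + 1 < l.length - 1 := by omega
      have h := mp_lt hl hlt (by omega)
      rwa [mp_phi_last hl (by omega)] at h
    · left
      have h := mp_lt hl hkpos (by omega)
      rwa [mp_phi_first hl (by omega)] at h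
  by_cases hu : u ∈ l
  · have hψ : linF (psiW n a l) u = s ^ 2 - A ^ 2 := psi_path h0 ha hl hc hu
    have hiden : linF (psiW n a l) u - ((tk + tk1) * s - (tk * tk1 + A ^ 2))
        = (s - tk) * (s - tk1) := by rw [hψ]; ring
    obtain ⟨j, hj, rfl⟩ := List.mem_iff_getElem.mp hu
    have hprod : 0 ≤ (s - tk) * (s - tk1) := by
      rcases le_or_gt j k with hjk | hjk
      · have h1 : s ≤ tk := mp_le hl hjk (by omega)
        have h2 : s < tk1 := lt_of_le_of_lt h1 hklt
        nlinarith
      · have h1 : tk1 ≤ s := mp_le hl hjk hj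
        have h2 : tk < s := lt_of_lt_of_le hklt h1
        nlinarith
    constructor
    · linarith
    · intro heq
      have hz : (s - tk) * (s - tk1) = 0 := by linarith
      rcases mul_eq_zero.mp hz with hz | hz
      · left
        exact phi_vertex_inj h0 ha (mp_vertex hl hj) (mp_vertex hl (by omega))
          (by rw [← htk]; linarith)
      · right
        exact phi_vertex_inj h0 ha (mp_vertex hl hj) (mp_vertex hl hk)
          (by rw [← htk1]; linarith)
  · have hbd := abs_le.mp (phi_vertex_abs_le h0 ha hv)
    rcases psi_off h0 ha hl hv hu with hpos | ⟨hzero, habs⟩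
    · have := chordL_nonpos hA htk_lb hklt htk1_ub hbd.1 hbd.2
      exact ⟨by linarith, fun heq => absurd (heq ▸ this) (by simp [hpos.not_ge])⟩
    · have habs' := abs_lt.mp habs
      have := chordL_neg hA htk_lb hklt htk1_ub hstrict habs'.1 habs'.2
      exact ⟨by linarith, fun heq => absurd (heq ▸ this) (by simp [hzero])⟩

lemma fiber_lb (h0 : 0 < a 0) (ha : StrictMono a) (hl : IsMonoPath n a l)
    (hc : CombCoherent n l) {k : ℕ} (hk : k + 1 < l.length) {y : Fin (n+2) → ℝ}
    (hy : y ∈ crossPoly (n+2)) :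
    (phi n a (l[k]'(by omega)) + phi n a l[k+1]) * phi n a y -
      (phi n a (l[k]'(by omega)) * phi n a l[k+1] + a (Fin.last (n+1)) ^ 2)
      ≤ linF (psiW n a l) y := by
  obtain ⟨ι, t, w, z, hw, hw1, hz, rfl⟩ := crossPoly_decomp hy
  rw [comb_linF, phi_comb]
  calc (phi n a (l[k]'(by omega)) + phi n a l[k+1]) * (∑ i ∈ t, w i * phi n a (z i)) -
        (phi n a (l[k]'(by omega)) * phi n a l[k+1] + a (Fin.last (n+1)) ^ 2)
      = ∑ i ∈ t, w i * ((phi n a (l[k]'(by omega)) + phi n a l[k+1]) * phi n a (z i) -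
        (phi n a (l[k]'(by omega)) * phi n a l[k+1] + a (Fin.last (n+1)) ^ 2)) := by
        rw [sum_affine t w (fun i => phi n a (z i)) _ _ hw1]
    _ ≤ ∑ i ∈ t, w i * linF (psiW n a l) (z i) := by
        refine Finset.sum_le_sum fun i hi => mul_le_mul_of_nonneg_left ?_ (hw i hi)
        exact (chord_key h0 ha hl hc hk (hz i hi)).1

lemma seg_psi (h0 : 0 < a 0) (ha : StrictMono a) (hl : IsMonoPath n a l)
    (hc : CombCoherent n l) {k : ℕ} (hk : k + 1 < l.length) {x : Fin (n+2) → ℝ}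
    (hx : x ∈ segment ℝ (l[k]'(by omega)) l[k+1]) :
    linF (psiW n a l) x = (phi n a (l[k]'(by omega)) + phi n a l[k+1]) * phi n a x -
      (phi n a (l[k]'(by omega)) * phi n a l[k+1] + a (Fin.last (n+1)) ^ 2) ∧
    x ∈ crossPoly (n+2) := by
  obtain ⟨α, β, hα, hβ, hαβ, rfl⟩ := hx
  constructor
  · have hβ' : β = 1 - α := by linarith
    subst hβ'
    have e1 : linF (psiW n a l) (α • (l[k]'(by omega)) + (1-α) • l[k+1])
        = α * linF (psiW n a l) (l[k]'(by omega)) + (1-α) * linF (psiW n a l) l[k+1] := by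
      rw [map_add, map_smul, map_smul]; simp [smul_eq_mul]
    have e2 : phi n a (α • (l[k]'(by omega)) + (1-α) • l[k+1])
        = α * phi n a (l[k]'(by omega)) + (1-α) * phi n a l[k+1] := by
      rw [phi_eq_linF, map_add, map_smul, map_smul]
      simp [smul_eq_mul, phi_eq_linF]
    rw [e1, e2, psi_path h0 ha hl hc (List.getElem_mem (by omega : k < l.length)),
      psi_path h0 ha hl hc (List.getElem_mem hk)]
    ring
  · exact segment_sub_crossPoly (mp_vertex hl (by omega)) (mp_vertex hl hk)
      ⟨α, β, hα, hβ, hαβ, rfl⟩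

lemma find_piece (h0 : 0 < a 0) (ha : StrictMono a) (hl : IsMonoPath n a l) {t' : ℝ}
    (hlb : -a (Fin.last (n+1)) ≤ t') (hub : t' ≤ a (Fin.last (n+1))) :
    ∃ k, ∃ (hk : k + 1 < l.length),
      phi n a (l[k]'(by omega)) ≤ t' ∧ t' ≤ phi n a l[k+1] := by
  classical
  have h3 := mp_len3 hl
  set P : ℕ → Prop := fun k => ∃ h : k < l.length, phi n a l[k] ≤ t' with hP
  have hP0 : P 0 := ⟨by omega, by rw [mp_phi_first hl (by omega)]; exact hlb⟩
  have hKle : Nat.findGreatest P (l.length - 2) ≤ l.length - 2 := Nat.findGreatest_le _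
  obtain ⟨hKlt, hKphi⟩ : P (Nat.findGreatest P (l.length - 2)) :=
    Nat.findGreatest_spec (Nat.zero_le _) hP0
  set K := Nat.findGreatest P (l.length - 2) with hKdef
  refine ⟨K, by omega, hKphi, ?_⟩
  rcases eq_or_lt_of_le hKle with heq | hlt
  · have hKeq : K + 1 = l.length - 1 := by omega
    have hre : (l[K+1]'(by omega) : Fin (n+2) → ℝ) = l[l.length - 1]'(by omega) := by
      simp only [hKeq]
    rw [hre, mp_phi_last hl (by omega)]
    exact hub
  · have hng : ¬P (K+1) := Nat.findGreatest_is_greatest (Nat.lt_succ_self K) (by omega)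
    have hng' : ¬∃ h : K + 1 < l.length, phi n a l[K+1] ≤ t' := by rw [hP] at hng; exact hng
    push_neg at hng'
    exact le_of_lt (hng' (by omega))

end Main2

section Main3

variable {n : ℕ} {a : Fin (n + 2) → ℝ} {l : List (Fin (n + 2) → ℝ)}

/-- A point `t0 • e_last` with `0 < t0 < 1` lies on no segment between two distinct,
non-antipodal vertices of the cross-polytope. -/
lemma stdVec_apply {m : ℕ} (i j : Fin m) : stdVec m i j = if j = i then 1 else 0 := by
  simp [stdVec, Pi.single_apply]

lemma seg_y_impossible {u v : Fin (n+2) → ℝ} (hu : IsCPVertex (n+2) u)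
    (hv : IsCPVertex (n+2) v) (huv : u ≠ v) (hanti : v ≠ -u) {α β t0 : ℝ}
    (hα : 0 ≤ α) (hβ : 0 ≤ β) (hαβ : α + β = 1) (ht0 : 0 < t0) (ht1 : t0 < 1)
    (heq : α • u + β • v = t0 • lastVec n) : False := by
  obtain ⟨p, hp⟩ := hu
  obtain ⟨r, hr⟩ := hv
  obtain ⟨ε, hε1, hu'⟩ : ∃ ε : ℝ, (ε = 1 ∨ ε = -1) ∧ u = ε • stdVec (n+2) p := by
    rcases hp with rfl | rfl
    · exact ⟨1, Or.inl rfl, (one_smul ℝ _).symm⟩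
    · exact ⟨-1, Or.inr rfl, by rw [neg_smul, one_smul]⟩
  obtain ⟨τ, hτ1, hv'⟩ : ∃ τ : ℝ, (τ = 1 ∨ τ = -1) ∧ v = τ • stdVec (n+2) r := by
    rcases hr with rfl | rfl
    · exact ⟨1, Or.inl rfl, (one_smul ℝ _).symm⟩
    · exact ⟨-1, Or.inr rfl, by rw [neg_smul, one_smul]⟩
  subst hu' hv'
  have hε0 : ε ≠ 0 := by rcases hε1 with rfl | rfl <;> norm_num
  have hτ0 : τ ≠ 0 := by rcases hτ1 with rfl | rfl <;> norm_num
  have key : ∀ c : Fin (n+2), α * (ε * stdVec (n+2) p c) + β * (τ * stdVec (n+2) r c)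
      = t0 * stdVec (n+2) (Fin.last (n+1)) c := by
    intro c
    have h := congrFun heq c
    simp only [Pi.add_apply, Pi.smul_apply, smul_eq_mul, lastVec] at h
    exact h
  rcases eq_or_ne p r with rfl | hpr
  · rcases hε1 with rfl | rfl <;> rcases hτ1 with rfl | rfl
    · exact huv rfl
    · exact hanti (by rw [neg_smul])
    · exact hanti (by rw [neg_smul, neg_neg])
    · exact huv rfl
  · by_cases hpl : p = Fin.last (n+1)
    · subst hpl
      have hrl : r ≠ Fin.last (n+1) := fun h => hpr h.symm
      have h2 := key r
      rw [stdVec_apply, if_neg (Ne.symm hpr), stdVec_apply_self] at h2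
      simp only [mul_zero, mul_one, zero_add] at h2
      have hβ0 : β = 0 := by
        rcases mul_eq_zero.mp h2 with h | h
        · exact h
        · exact absurd h hτ0
      have hα1 : α = 1 := by linarith
      have h3 := key (Fin.last (n+1))
      rw [stdVec_apply_self, stdVec_apply, if_neg (Ne.symm hrl)] at h3
      rw [hα1, hβ0] at h3
      simp only [mul_zero, mul_one, zero_mul, add_zero, one_mul] at h3
      rcases hε1 with rfl | rfl <;> linarith
    · have h1 := key p
      rw [stdVec_apply_self, stdVec_apply, if_neg hpr, stdVec_apply, if_neg hpl] at h1
      simp only [mul_zero, mul_one, add_zero] at h1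
      have hα0 : α = 0 := by
        rcases mul_eq_zero.mp h1 with h | h
        · exact h
        · exact absurd h hε0
      have hβ1 : β = 1 := by linarith
      by_cases hrl : r = Fin.last (n+1)
      · subst hrl
        have h3 := key (Fin.last (n+1))
        rw [stdVec_apply, if_neg (Ne.symm hpl), stdVec_apply_self] at h3
        rw [hα0, hβ1] at h3
        simp only [mul_zero, mul_one, zero_mul, zero_add, one_mul] at h3
        rcases hτ1 with rfl | rfl <;> linarith
      · have h3 := key (Fin.last (n+1))
        rw [stdVec_apply, if_neg (Ne.symm hpl), stdVec_apply, if_neg (Ne.symm hrl),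
          stdVec_apply_self] at h3
        simp only [mul_zero, mul_one, add_zero, zero_add] at h3
        linarith

lemma mp_chain_at (hl : IsMonoPath n a l) {m : ℕ} (hm : m + 1 < l.length) :
    phi n a (l[m]'(by omega)) < phi n a l[m+1] ∧ l[m+1] ≠ -(l[m]'(by omega)) := by
  have := List.isChain_iff_getElem.mp hl.2.2.2 m (by omega)
  simpa using this

/-- The forward direction: coherence implies combinatorial coherence. -/
lemma mp_forward (h0 : 0 < a 0) (ha : StrictMono a) (hl : IsMonoPath n a l)
    (ψ : (Fin (n + 2) → ℝ) →ₗ[ℝ] ℝ)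
    (hψ : {x | ∃ q ∈ l.zip l.tail, x ∈ segment ℝ q.1 q.2} =
      {x ∈ crossPoly (n + 2) |
        ∀ y ∈ crossPoly (n + 2), phi n a y = phi n a x → ψ x ≤ ψ y}) :
    CombCoherent n l := by
  rintro ⟨j, hpj, hmj⟩
  have hA := a_pos h0 ha (Fin.last (n+1))
  have haj := a_pos h0 ha j.castSucc
  have hajA : a j.castSucc < a (Fin.last (n+1)) :=
    a_lt_last ha (Fin.castSucc_lt_last j).ne
  set t0 : ℝ := a j.castSucc / a (Fin.last (n+1)) with ht0def
  have ht0 : 0 < t0 := div_pos haj hA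
  have ht1 : t0 < 1 := (div_lt_one hA).mpr hajA
  set y : Fin (n+2) → ℝ := t0 • lastVec n with hydef
  have hvm : IsCPVertex (n+2) (-lastVec n) := ⟨Fin.last (n+1), Or.inr rfl⟩
  have hvp : IsCPVertex (n+2) (lastVec n) := ⟨Fin.last (n+1), Or.inl rfl⟩
  have hy_seg : y ∈ segment ℝ (-lastVec n) (lastVec n) := by
    refine ⟨(1 - t0)/2, (1 + t0)/2, by linarith, by linarith, by ring, ?_⟩
    rw [smul_neg, neg_add_eq_sub, ← sub_smul, hydef]
    congr 1; ring
  have hyc : y ∈ crossPoly (n+2) := segment_sub_crossPoly hvm hvp hy_seg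
  have hy_seg' : -y ∈ segment ℝ (-lastVec n) (lastVec n) := by
    refine ⟨(1 + t0)/2, (1 - t0)/2, by linarith, by linarith, by ring, ?_⟩
    rw [smul_neg, neg_add_eq_sub, ← sub_smul, hydef, ← neg_smul]
    congr 1; ring
  have hyc' : -y ∈ crossPoly (n+2) := segment_sub_crossPoly hvm hvp hy_seg'
  have hφy : phi n a y = a j.castSucc := by
    rw [hydef, phi_eq_linF, map_smul, smul_eq_mul, ← phi_eq_linF, lastVec, phi_std,
      ht0def, div_mul_cancel₀ _ (ne_of_gt hA)]
  -- both `±e_j` are minimizers in their fibers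
  have hLp : stdVec (n+2) j.castSucc ∈
      {x | ∃ q ∈ l.zip l.tail, x ∈ segment ℝ q.1 q.2} := by
    obtain ⟨k, hk, hke⟩ := mp_interior' hpj
    exact ⟨((l[k]'(by omega)), l[k+1]'(by omega)), mp_pair_mem (by omega),
      by rw [← hke]; exact right_mem_segment ℝ _ _⟩
  have hLm : -stdVec (n+2) j.castSucc ∈
      {x | ∃ q ∈ l.zip l.tail, x ∈ segment ℝ q.1 q.2} := by
    obtain ⟨k, hk, hke⟩ := mp_interior' hmj
    exact ⟨((l[k]'(by omega)), l[k+1]'(by omega)), mp_pair_mem (by omega),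
      by rw [← hke]; exact right_mem_segment ℝ _ _⟩
  rw [hψ] at hLp hLm
  obtain ⟨hcp, hminp⟩ := hLp
  obtain ⟨hcm, hminm⟩ := hLm
  have h1 : ψ (stdVec (n+2) j.castSucc) ≤ ψ y :=
    hminp y hyc (by rw [hφy, phi_std])
  have h2 : ψ (-stdVec (n+2) j.castSucc) ≤ ψ (-y) :=
    hminm (-y) hyc' (by rw [phi_neg, phi_neg, hφy, phi_std])
  rw [map_neg, map_neg, neg_le_neg_iff] at h2
  have h3 : ψ y = ψ (stdVec (n+2) j.castSucc) := le_antisymm h2 h1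
  -- hence y is a minimizer of its own fiber, so it lies on the path: contradiction
  have hyR : y ∈ {x ∈ crossPoly (n + 2) |
      ∀ y' ∈ crossPoly (n + 2), phi n a y' = phi n a x → ψ x ≤ ψ y'} := by
    refine ⟨hyc, fun z hz hφz => ?_⟩
    rw [h3]
    exact hminp z hz (by rw [hφz, hφy, phi_std])
  rw [← hψ] at hyR
  obtain ⟨q, hq, hseg⟩ := hyR
  obtain ⟨m, hm, rfl⟩ := zip_mem_pair hq
  obtain ⟨hlt, hanti⟩ := mp_chain_at hl hm
  obtain ⟨α, β, hα, hβ, hαβ, heqv⟩ := hseg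
  exact seg_y_impossible (mp_vertex hl (by omega)) (mp_vertex hl hm)
    (fun h => absurd hlt (by rw [h]; exact lt_irrefl _)) hanti hα hβ hαβ ht0 ht1 heqv

end Main3

section Main4

variable {n : ℕ} {a : Fin (n + 2) → ℝ} {l : List (Fin (n + 2) → ℝ)}

/-- The backward direction: the functional `linF (psiW n a l)` certifies coherence. -/
lemma mp_backward (h0 : 0 < a 0) (ha : StrictMono a) (hl : IsMonoPath n a l)
    (hc : CombCoherent n l) :
    {x | ∃ q ∈ l.zip l.tail, x ∈ segment ℝ q.1 q.2} =
      {x ∈ crossPoly (n + 2) |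
        ∀ y ∈ crossPoly (n + 2), phi n a y = phi n a x →
          linF (psiW n a l) x ≤ linF (psiW n a l) y} := by
  classical
  ext x
  simp only [Set.mem_setOf_eq, Set.mem_sep_iff]
  constructor
  · rintro ⟨q, hq, hxq⟩
    obtain ⟨k, hk, rfl⟩ := zip_mem_pair hq
    obtain ⟨hψx, hxc⟩ := seg_psi h0 ha hl hc hk hxq
    refine ⟨hxc, fun y hy hφ => ?_⟩
    have hlb := fiber_lb h0 ha hl hc hk hy
    rw [hψx, ← hφ]
    exact hlb
  · rintro ⟨hxc, hmin⟩
    obtain ⟨hlb, hub⟩ := phi_crossPoly_bounds h0 ha hxc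
    obtain ⟨k, hk, hk1, hk2⟩ := find_piece h0 ha hl hlb hub
    set tk := phi n a (l[k]'(by omega)) with htkdef
    set tk1 := phi n a (l[k+1]'hk) with htk1def
    set t' := phi n a x with ht'def
    set A := a (Fin.last (n+1)) with hAdef
    have hklt : tk < tk1 := mp_lt hl (Nat.lt_succ_self k) hk
    have hd : 0 < tk1 - tk := by linarith
    set α0 : ℝ := (tk1 - t') / (tk1 - tk) with hα0def
    set β0 : ℝ := (t' - tk) / (tk1 - tk) with hβ0def
    have hα0 : 0 ≤ α0 := div_nonneg (by linarith) (le_of_lt hd)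
    have hβ0 : 0 ≤ β0 := div_nonneg (by linarith) (le_of_lt hd)
    have hsum0 : α0 + β0 = 1 := by
      rw [hα0def, hβ0def, ← add_div]
      rw [show tk1 - t' + (t' - tk) = tk1 - tk by ring]
      exact div_self (ne_of_gt hd)
    set p : Fin (n+2) → ℝ := α0 • (l[k]'(by omega)) + β0 • (l[k+1]'hk) with hpdef
    have hp_seg : p ∈ segment ℝ (l[k]'(by omega)) (l[k+1]'hk) :=
      ⟨α0, β0, hα0, hβ0, hsum0, rfl⟩
    obtain ⟨hψp, hpc⟩ := seg_psi h0 ha hl hc hk hp_seg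
    have hφp : phi n a p = t' := by
      rw [hpdef, phi_eq_linF, map_add, map_smul, map_smul, smul_eq_mul, smul_eq_mul,
        ← phi_eq_linF, ← phi_eq_linF, ← htkdef, ← htk1def, hα0def, hβ0def]
      field_simp
      ring
    have hxp : linF (psiW n a l) x ≤ linF (psiW n a l) p :=
      hmin p hpc (by rw [hφp])
    have hLx : (tk + tk1) * t' - (tk * tk1 + A^2) ≤ linF (psiW n a l) x :=
      fiber_lb h0 ha hl hc hk hxc
    have hψx : linF (psiW n a l) x = (tk + tk1) * t' - (tk * tk1 + A^2) := by
      rw [hψp, hφp] at hxp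
      linarith
    -- decompose x into vertices
    obtain ⟨ι, t, w, z, hw, hw1, hz, hxeq⟩ := crossPoly_decomp hxc
    have e1 : linF (psiW n a l) x = ∑ i ∈ t, w i * linF (psiW n a l) (z i) := by
      rw [hxeq, comb_linF]
    have e3 : ∑ i ∈ t, w i * phi n a (z i) = t' := by
      rw [← phi_comb, ← hxeq]
    have e2 : ∑ i ∈ t, w i * ((tk + tk1) * phi n a (z i) - (tk * tk1 + A^2))
        = (tk + tk1) * t' - (tk * tk1 + A^2) := by
      rw [sum_affine t w (fun i => phi n a (z i)) _ _ hw1, e3]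
    have hS : ∑ i ∈ t, w i * (linF (psiW n a l) (z i) -
        ((tk + tk1) * phi n a (z i) - (tk * tk1 + A^2))) = 0 := by
      have hsplit : ∀ i ∈ t, w i * (linF (psiW n a l) (z i) -
          ((tk + tk1) * phi n a (z i) - (tk * tk1 + A^2)))
          = w i * linF (psiW n a l) (z i) -
            w i * ((tk + tk1) * phi n a (z i) - (tk * tk1 + A^2)) := fun i _ => by ring
      rw [Finset.sum_congr rfl hsplit, Finset.sum_sub_distrib, e2, ← e1, hψx]
      ring
    have hterm : ∀ i ∈ t, w i * (linF (psiW n a l) (z i) -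
        ((tk + tk1) * phi n a (z i) - (tk * tk1 + A^2))) = 0 := by
      refine (Finset.sum_eq_zero_iff_of_nonneg fun i hi => ?_).mp hS
      have := (chord_key h0 ha hl hc hk (hz i hi)).1
      exact mul_nonneg (hw i hi) (by rw [← htkdef, ← htk1def, ← hAdef] at this; linarith)
    have hzi : ∀ i ∈ t, w i ≠ 0 → (z i = l[k]'(by omega) ∨ z i = l[k+1]'hk) := by
      intro i hi hwi
      refine (chord_key h0 ha hl hc hk (hz i hi)).2 ?_
      have h := hterm i hi
      rcases mul_eq_zero.mp h with h' | h'
      · exact absurd h' hwi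
      · rw [← htkdef, ← htk1def, ← hAdef]
        linarith
    -- x is a convex combination of the two endpoints of piece k
    have hne : (l[k]'(by omega)) ≠ (l[k+1]'hk) := by
      intro h
      rw [htkdef, h, ← htk1def] at hklt
      exact lt_irrefl _ hklt
    have hx2 : x = (∑ i ∈ t.filter (fun i => z i = l[k]'(by omega)), w i) • (l[k]'(by omega))
        + (∑ i ∈ t.filter (fun i => ¬(z i = l[k]'(by omega))), w i) • (l[k+1]'hk) := by
      rw [hxeq, ← Finset.sum_filter_add_sum_filter_not t (fun i => z i = l[k]'(by omega))]
      congr 1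
      · rw [Finset.sum_smul]
        refine Finset.sum_congr rfl fun i hi => ?_
        rw [(Finset.mem_filter.mp hi).2]
      · rw [Finset.sum_smul]
        refine Finset.sum_congr rfl fun i hi => ?_
        obtain ⟨hit, hine⟩ := Finset.mem_filter.mp hi
        by_cases hwi : w i = 0
        · rw [hwi, zero_smul, zero_smul]
        · rcases hzi i hit hwi with h | h
          · exact absurd h hine
          · rw [h]
    refine ⟨((l[k]'(by omega)), l[k+1]'hk), mp_pair_mem hk, ?_⟩
    refine ⟨_, _, Finset.sum_nonneg (fun i hi => hw i (Finset.mem_filter.mp hi).1),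
      Finset.sum_nonneg (fun i hi => hw i (Finset.mem_filter.mp hi).1), ?_, hx2.symm⟩
    rw [Finset.sum_filter_add_sum_filter_not]
    exact hw1

end Main4

/-- A `φ`-monotone path on the cross-polytope `◇^{n+2}` is coherent
(i.e. there is a linear functional `ψ` such that the union of the segments of the path
is exactly the set of `ψ`-minimal points of the fibers of `φ` over the cross-polytope)
if and only if no antipodal pair `±e_j`, `j ∈ {1,…,n-1}`, occurs among its interior
vertices. -/
theorem monotone_path_coherent_iff (n : ℕ) (a : Fin (n + 2) → ℝ)
    (h0 : 0 < a 0) (ha : StrictMono a)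
    (l : List (Fin (n + 2) → ℝ)) (hl : IsMonoPath n a l) :
    (∃ ψ : (Fin (n + 2) → ℝ) →ₗ[ℝ] ℝ,
      {x | ∃ q ∈ l.zip l.tail, x ∈ segment ℝ q.1 q.2} =
        {x ∈ crossPoly (n + 2) |
          ∀ y ∈ crossPoly (n + 2), phi n a y = phi n a x → ψ x ≤ ψ y}) ↔
      CombCoherent n l := by
  constructor
  · rintro ⟨ψ, hψ⟩
    exact mp_forward h0 ha hl ψ hψ
  · intro hc
    exact ⟨linF (psiW n a l), mp_backward h0 ha hl hc⟩
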